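/- Let β be a closed 2-form with constant coefficients on ℝ^{2n}, i.e. β = Φ*ω₀ − ω₀ for a linear map Φ. Then the 1-form σ(x) = (1/2)·ι_X β (X the radial field) satisfies dσ = β and ‖σ(x)‖₂ ≤ (1/√2)·‖x‖·‖β‖₂ for all x. -/
import Mathlib


/-- The standard symplectic form `ω₀` on `ℝ^{2n}`, coordinates indexed by `Fin n × Fin 2`
(`(j,0)` is `x_j`, `(j,1)` is `y_j`). -/
def omega0 (n : ℕ) (u v : Fin n × Fin 2 → ℝ) : ℝ :=
  ∑ j : Fin n, (u (j, 0) * v (j, 1) - u (j, 1) * v (j, 0))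

/-- The Euclidean norm of a 2-covector on `ℝ^{2n}`. -/
noncomputable def eucNorm2 (n : ℕ)
    (ω : (Fin n × Fin 2 → ℝ) → (Fin n × Fin 2 → ℝ) → ℝ) : ℝ :=
  Real.sqrt ((1 / 2) * ∑ i : Fin n × Fin 2, ∑ j : Fin n × Fin 2,
    (ω (Pi.single i 1) (Pi.single j 1)) ^ 2)

lemma omega0_add_left (n : ℕ) (u u' v : Fin n × Fin 2 → ℝ) :
    omega0 n (u + u') v = omega0 n u v + omega0 n u' v := by
  simp only [omega0, Pi.add_apply, ← Finset.sum_add_distrib]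
  exact Finset.sum_congr rfl fun j _ => by ring

lemma omega0_smul_left (n : ℕ) (c : ℝ) (u v : Fin n × Fin 2 → ℝ) :
    omega0 n (c • u) v = c * omega0 n u v := by
  simp only [omega0, Pi.smul_apply, smul_eq_mul, Finset.mul_sum]
  exact Finset.sum_congr rfl fun j _ => by ring

lemma omega0_anti (n : ℕ) (u v : Fin n × Fin 2 → ℝ) :
    omega0 n u v = - omega0 n v u := by
  simp only [omega0, ← Finset.sum_neg_distrib]
  exact Finset.sum_congr rfl fun j _ => by ring

/-- For the constant-coefficient closed 2-form `β = Φ*ω₀ − ω₀` of a linear map `Φ`,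
the 1-form `σ(x) = (1/2) ι_X β` (with `X` the radial field) satisfies `dσ = β` and
`‖σ(x)‖₂ ≤ (1/√2) ‖x‖ ‖β‖₂`. -/
theorem half_radial_contraction_primitive (n : ℕ)
    (Φ : (Fin n × Fin 2 → ℝ) →ₗ[ℝ] (Fin n × Fin 2 → ℝ))
    (β : (Fin n × Fin 2 → ℝ) → (Fin n × Fin 2 → ℝ) → ℝ)
    (hβ : ∀ u v, β u v = omega0 n (Φ u) (Φ v) - omega0 n u v)
    (σ : (Fin n × Fin 2 → ℝ) → (Fin n × Fin 2 → ℝ) → ℝ)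
    (hσ : ∀ x v, σ x v = (1 / 2) * β x v) :
    (∀ x u v, fderiv ℝ (fun y => σ y v) x u - fderiv ℝ (fun y => σ y u) x v = β u v) ∧
    (∀ x : Fin n × Fin 2 → ℝ,
      Real.sqrt (∑ i, (σ x (Pi.single i 1)) ^ 2) ≤
        (1 / Real.sqrt 2) * Real.sqrt (∑ i, x i ^ 2) * eucNorm2 n β) := by
  have hb_anti : ∀ u v, β u v = - β v u := by
    intro u v
    rw [hβ, hβ, omega0_anti n (Φ u), omega0_anti n u]
    ring
  -- σ (·) v as a linear map
  have Ldef : ∀ v : Fin n × Fin 2 → ℝ,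
      ∃ L : (Fin n × Fin 2 → ℝ) →ₗ[ℝ] ℝ, ∀ y, L y = σ y v := by
    intro v
    refine ⟨{ toFun := fun y => σ y v,
              map_add' := ?_, map_smul' := ?_ }, fun y => rfl⟩
    · intro a b
      simp only [hσ, hβ, map_add, omega0_add_left]; ring
    · intro c a
      simp only [hσ, hβ, map_smul, omega0_smul_left, smul_eq_mul, RingHom.id_apply]; ring
  choose L hL using Ldef
  have hfd : ∀ v x, fderiv ℝ (fun y => σ y v) x = (L v).toContinuousLinearMap := by
    intro v x
    have : (fun y => σ y v) = ⇑((L v).toContinuousLinearMap) := by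
      funext y; simp [hL]
    rw [this, ContinuousLinearMap.fderiv]
  constructor
  · intro x u v
    rw [hfd, hfd]
    simp only [LinearMap.coe_toContinuousLinearMap', hL]
    rw [hσ, hσ, hb_anti v u]
    ring
  · intro x
    -- expand σ x v = ∑ j, x j * σ (e j) v
    have hexp : ∀ v, σ x v = ∑ j : Fin n × Fin 2, x j * σ (Pi.single j 1) v := by
      intro v
      have hx : x = ∑ j : Fin n × Fin 2, x j • (Pi.single j 1 : Fin n × Fin 2 → ℝ) := by
        funext k
        simp [Finset.sum_apply, Pi.single_apply, mul_ite, Finset.sum_ite_eq,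
          Finset.sum_ite_eq']
      rw [← hL v x]
      conv_lhs => rw [hx]
      rw [map_sum]
      simp only [LinearMap.map_smul]
      simp only [smul_eq_mul, hL]
    set S : ℝ := ∑ i : Fin n × Fin 2, ∑ j : Fin n × Fin 2,
        (β (Pi.single i 1) (Pi.single j 1)) ^ 2 with hS
    have hSnn : 0 ≤ S := Finset.sum_nonneg fun i _ =>
      Finset.sum_nonneg fun j _ => sq_nonneg _
    have hxnn : (0:ℝ) ≤ ∑ i, x i ^ 2 := Finset.sum_nonneg fun i _ => sq_nonneg _
    have key : (∑ i, (σ x (Pi.single i 1)) ^ 2) ≤ (1/4) * (∑ i, x i ^ 2) * S := by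
      have hstep : ∀ i : Fin n × Fin 2, (σ x (Pi.single i 1)) ^ 2 ≤
          (∑ j, x j ^ 2) * ∑ j : Fin n × Fin 2, (σ (Pi.single j 1) (Pi.single i 1)) ^ 2 := by
        intro i
        rw [hexp]
        exact Finset.sum_mul_sq_le_sq_mul_sq _ _ _
      calc (∑ i, (σ x (Pi.single i 1)) ^ 2)
          ≤ ∑ i : Fin n × Fin 2, (∑ j, x j ^ 2) *
              ∑ j : Fin n × Fin 2, (σ (Pi.single j 1) (Pi.single i 1)) ^ 2 :=
            Finset.sum_le_sum fun i _ => hstep i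
        _ = (1/4) * (∑ i, x i ^ 2) * S := by
            have hleaf : ∀ i j : Fin n × Fin 2,
                (σ (Pi.single j 1) (Pi.single i 1)) ^ 2
                  = (1/4) * (β (Pi.single j 1) (Pi.single i 1)) ^ 2 := by
              intro i j; rw [hσ]; ring
            simp_rw [hleaf, ← Finset.mul_sum]
            rw [Finset.sum_comm, ← hS]
            ring
    have hrhs : (1 / Real.sqrt 2) * Real.sqrt (∑ i, x i ^ 2) * eucNorm2 n β
        = Real.sqrt ((1/4) * (∑ i, x i ^ 2) * S) := by
      rw [eucNorm2, ← hS]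
      rw [show (1:ℝ) / Real.sqrt 2 = Real.sqrt (1/2) by
        rw [Real.sqrt_div' 1 (by norm_num), Real.sqrt_one]]
      rw [← Real.sqrt_mul (by positivity), ← Real.sqrt_mul (by positivity)]
      ring_nf
    rw [hrhs]
    exact Real.sqrt_le_sqrt key
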